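/- Let σ > 0 and let n be a nonzero integer. The following are equivalent: (i) there exist y : ℝ → ℝ twice continuously differentiable on [−1, 1] and h ∈ ℝ, with y not identically zero on [−1, 1] or h ≠ 0, such that y''(x) = 0 for all x ∈ [−1, 1], −n²·h = y'(1), y(−1) = 0, and y(1) = −σ·n²·h; (ii) σ = 2. (In other words, λ = −n² is an eigenvalue of A_n if and only if σ = 2.) -/

import Mathlib

open Set

/-- If a function has derivative 0 within a convex set, it is constant there. -/
lemma const_of_deriv_zero {s : Set ℝ} (hs : Convex ℝ s) {f : ℝ → ℝ}
    (hf : ∀ x ∈ s, HasDerivWithinAt f 0 s x) {a b : ℝ} (ha : a ∈ s) (hb : b ∈ s) :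
    f a = f b := by
  have := hs.norm_image_sub_le_of_norm_hasDerivWithin_le (C := 0) (f' := fun _ => (0:ℝ))
    hf (fun x _ => by simp) hb ha
  simp at this
  linarith [abs_nonneg (f a - f b), this]

/-- `λ = -n²` is an eigenvalue of the projected operator `A_n` if and only if `σ = 2`:
there is a nontrivial `(y, h)` with `y'' = 0` on `[-1,1]`, `-n²·h = y'(1)`, `y(-1) = 0` and
`y(1) = -σ·n²·h` precisely when `σ = 2`. -/
theorem stmt6 (σ : ℝ) (hσ : 0 < σ) (n : ℤ) (hn : n ≠ 0) :
    (∃ (y y' y'' : ℝ → ℝ) (h : ℝ),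
      (∀ x ∈ Icc (-1:ℝ) 1, HasDerivWithinAt y (y' x) (Icc (-1:ℝ) 1) x) ∧
      (∀ x ∈ Icc (-1:ℝ) 1, HasDerivWithinAt y' (y'' x) (Icc (-1:ℝ) 1) x) ∧
      ContinuousOn y'' (Icc (-1:ℝ) 1) ∧
      ((¬ ∀ x ∈ Icc (-1:ℝ) 1, y x = 0) ∨ h ≠ 0) ∧
      (∀ x ∈ Icc (-1:ℝ) 1, y'' x = 0) ∧
      -(n:ℝ)^2 * h = y' 1 ∧
      y (-1) = 0 ∧
      y 1 = -σ * (n:ℝ)^2 * h)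
    ↔ σ = 2 := by
  have hmem1 : (1:ℝ) ∈ Icc (-1:ℝ) 1 := by norm_num
  have hmemm1 : (-1:ℝ) ∈ Icc (-1:ℝ) 1 := by norm_num
  have hconv : Convex ℝ (Icc (-1:ℝ) 1) := convex_Icc _ _
  have hn2 : ((n:ℝ))^2 ≠ 0 := by positivity
  constructor
  · rintro ⟨y, y', y'', h, hy1, hy2, _, hnt, hzero, hbc1, hbc2, hbc3⟩
    -- y' is constant on [-1,1]
    have hy'const : ∀ x ∈ Icc (-1:ℝ) 1, y' x = y' 1 := by
      intro x hx
      exact const_of_deriv_zero hconv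
        (fun z hz => by simpa [hzero z hz] using hy2 z hz) hx hmem1
    -- y x - y' 1 * x is constant
    have hlin : ∀ x ∈ Icc (-1:ℝ) 1, y x - y' 1 * x = y (-1) - y' 1 * (-1) := by
      intro x hx
      refine const_of_deriv_zero hconv (f := fun t => y t - y' 1 * t) ?_ hx hmemm1
      intro z hz
      have := (hy1 z hz).sub ((hasDerivWithinAt_id z _).const_mul (y' 1))
      simpa [hy'const z hz, Pi.sub_def] using this
    have h1 := hlin 1 hmem1
    rw [hbc2, hbc3] at h1
    -- -σ n² h - y'1 = y'1,  y'1 = -n² h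
    have key : -σ * (n:ℝ)^2 * h = 2 * y' 1 := by linarith
    rw [← hbc1] at key
    by_cases hh : h = 0
    · exfalso
      rcases hnt with hnt | hnt
      · apply hnt
        intro x hx
        have := hlin x hx
        rw [hbc2, ← hbc1, hh] at this
        simpa using this
      · exact hnt hh
    · have : σ * ((n:ℝ)^2 * h) = 2 * ((n:ℝ)^2 * h) := by ring_nf; ring_nf at key; linarith
      exact mul_right_cancel₀ (mul_ne_zero hn2 hh) this
  · rintro rfl
    refine ⟨fun x => x + 1, fun _ => 1, fun _ => 0, -1/(n:ℝ)^2, ?_, ?_, ?_, ?_, ?_, ?_, ?_, ?_⟩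
    · intro x hx
      simpa using (hasDerivWithinAt_id x _).add_const 1
    · intro x hx; exact hasDerivWithinAt_const _ _ _
    · exact continuousOn_const
    · right; simp [hn2]
    · intro x _; rfl
    · field_simp
    · norm_num
    · field_simp
      norm_num
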